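/- arXiv:1109.3641 — 2 statements merged into one kernel-verified Lean document; each statement's English description precedes it below -/
import Mathlib

section
/- An ascent sequence contains the pattern 102 if and only if it contains the pattern 0102. In particular, the sets of ascent sequences of length n avoiding 102 and avoiding 0102 are equal. -/
/-- Number of ascents (adjacent strict rises) in a list of naturals. -/
def ascList (l : List ℕ) : ℕ :=
  (l.zip l.tail).countP (fun p => decide (p.1 < p.2))

/-- `l` is an ascent sequence: nonempty, starts with 0, and each later letter is at most
one more than the number of ascents in the preceding prefix. -/
def IsAscSeq (l : List ℕ) : Prop :=
  l ≠ [] ∧ l.getD 0 0 = 0 ∧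
    ∀ i, 0 < i → i < l.length → l.getD i 0 ≤ ascList (l.take i) + 1

/-- A sequence contains the pattern 102. -/
def Contains102 (l : List ℕ) : Prop :=
  ∃ i j k, i < j ∧ j < k ∧ k < l.length ∧
    l.getD j 0 < l.getD i 0 ∧ l.getD i 0 < l.getD k 0

/-- A sequence contains the pattern 0102. -/
def Contains0102 (l : List ℕ) : Prop :=
  ∃ i j k m, i < j ∧ j < k ∧ k < m ∧ m < l.length ∧
    l.getD i 0 = l.getD k 0 ∧ l.getD i 0 < l.getD j 0 ∧ l.getD j 0 < l.getD m 0

lemma ascList_cons_cons (x y : ℕ) (R : List ℕ) :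
    ascList (x :: y :: R) = ascList (y :: R) + (if x < y then 1 else 0) := by
  simp [ascList, List.countP_cons]

/-- In a weakly increasing list, the number of ascents plus the first entry
is at most the last entry. -/
lemma asc_mono (L : List ℕ)
    (h : ∀ t, t + 1 < L.length → L.getD t 0 ≤ L.getD (t + 1) 0) :
    L.getD 0 0 + ascList L ≤ L.getD (L.length - 1) 0 := by
  induction L with
  | nil => simp [ascList]
  | cons x T IH =>
    cases T with
    | nil => simp [ascList]
    | cons y R =>
      have h0 : x ≤ y := by
        have := h 0 (by simp)
        simpa using this
      have IH' := IH (fun t ht => by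
        have := h (t + 1) (by simpa using Nat.succ_lt_succ ht)
        simpa using this)
      have hlen : (x :: y :: R).length - 1 = ((y :: R).length - 1) + 1 := by
        simp
      rw [hlen, List.getD_cons_succ, ascList_cons_cons, List.getD_cons_zero]
      rw [List.getD_cons_zero] at IH'
      split <;> omega

lemma getD_take (l : List ℕ) (q t : ℕ) (h : t < q) (h2 : q ≤ l.length) :
    (l.take q).getD t 0 = l.getD t 0 := by
  rw [List.getD_eq_getElem _ _ (by simp; omega), List.getD_eq_getElem _ _ (by omega)]
  simp [List.getElem_take]

/-- Key lemma: a 102 occurrence in an ascent sequence yields a 0102 occurrence,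
by strong induction on the middle value of the occurrence. -/
lemma key (l : List ℕ) (hl : IsAscSeq l) :
    ∀ v i j k, i < j → j < k → k < l.length →
      l.getD j 0 < l.getD i 0 → l.getD i 0 < l.getD k 0 → l.getD j 0 = v →
      Contains0102 l := by
  intro v
  induction v using Nat.strong_induction_on with
  | _ v IH =>
  intro i j k hij hjk hk h1 h2 hv
  have hilen : i < l.length := by omega
  have hP : ∃ t, v < l.getD t 0 := ⟨i, hv ▸ h1⟩
  classical
  set q := Nat.find hP with hqdef
  have hq : v < l.getD q 0 := Nat.find_spec hP
  have hmin : ∀ p, p < q → ¬ v < l.getD p 0 := fun p hp => Nat.find_min hP hp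
  have hqi : q ≤ i := Nat.find_le (hv ▸ h1)
  have hq0 : 0 < q := by
    rcases Nat.eq_zero_or_pos q with h0 | h0
    · rw [h0, hl.2.1] at hq; omega
    · exact h0
  have hqlen : q < l.length := by omega
  by_cases hcopy : ∃ p, p < q ∧ l.getD p 0 = v
  · obtain ⟨p, hpq, hpv⟩ := hcopy
    exact ⟨p, i, j, k, by omega, hij, hjk, hk, by rw [hpv, hv], by rw [hpv, ← hv]; exact h1,
      h2⟩
  · push_neg at hcopy
    have hall : ∀ p, p < q → l.getD p 0 < v := by
      intro p hp
      have := hmin p hp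
      have := hcopy p hp
      omega
    by_cases hdesc : ∃ t, t + 1 < q ∧ l.getD (t + 1) 0 < l.getD t 0
    · obtain ⟨t, htq, hdt⟩ := hdesc
      have htv : l.getD t 0 < v := hall t (by omega)
      exact IH (l.getD (t + 1) 0) (by omega) t (t + 1) q (by omega) htq hqlen hdt
        (by omega) rfl
    · exfalso
      push_neg at hdesc
      have hmono : ∀ t, t + 1 < (l.take q).length →
          (l.take q).getD t 0 ≤ (l.take q).getD (t + 1) 0 := by
        intro t ht
        rw [List.length_take] at ht
        have htq : t + 1 < q := lt_of_lt_of_le ht (min_le_left _ _)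
        rw [getD_take l q t (by omega) (by omega), getD_take l q (t + 1) htq (by omega)]
        exact hdesc t htq
      have hA := asc_mono (l.take q) hmono
      have hlenq : (l.take q).length = q := by
        rw [List.length_take]; omega
      rw [hlenq, getD_take l q 0 hq0 (by omega), getD_take l q (q - 1) (by omega) (by omega),
        hl.2.1] at hA
      have hlast : l.getD (q - 1) 0 < v := hall (q - 1) (by omega)
      have hasc := hl.2.2 q hq0 hqlen
      omega

/-- An ascent sequence contains 102 iff it contains 0102; hence the avoidance sets of
102 and 0102 coincide for each length. -/
theorem stmt17 :
    (∀ l : List ℕ, IsAscSeq l → (Contains102 l ↔ Contains0102 l)) ∧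
    ∀ n : ℕ,
      {l : List ℕ | l.length = n ∧ IsAscSeq l ∧ ¬ Contains102 l} =
      {l : List ℕ | l.length = n ∧ IsAscSeq l ∧ ¬ Contains0102 l} := by
  have main : ∀ l : List ℕ, IsAscSeq l → (Contains102 l ↔ Contains0102 l) := by
    intro l hl
    constructor
    · rintro ⟨i, j, k, hij, hjk, hk, h1, h2⟩
      exact key l hl (l.getD j 0) i j k hij hjk hk h1 h2 rfl
    · rintro ⟨i, j, k, m, hij, hjk, hkm, hm, he, h1, h2⟩
      exact ⟨j, k, m, hjk, hkm, hm, he ▸ h1, h2⟩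
  refine ⟨main, fun n => ?_⟩
  ext l
  simp only [Set.mem_setOf_eq]
  constructor
  · rintro ⟨h1, h2, h3⟩
    exact ⟨h1, h2, fun hc => h3 ((main l h2).mpr hc)⟩
  · rintro ⟨h1, h2, h3⟩
    exact ⟨h1, h2, fun hc => h3 ((main l h2).mp hc)⟩
end

section
/- The number of ascent sequences of length n avoiding the pattern 0112 is (3^{n-1}+1)/2; equivalently, 1 + sum over k from 1 to n-1 of binomial(n-1,k) * sum over i from 1 to k of binomial(k-1, k-i) equals (3^{n-1}+1)/2. Moreover, the 0112-avoiding ascent sequences are precisely those consisting of a strictly increasing sequence 0,1,...,k followed by a weakly decreasing sequence, the whole arbitrarily interspersed with 0's. -/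
/-- A sequence contains the pattern 0112. -/
def Contains0112 (l : List ℕ) : Prop :=
  ∃ i j k m, i < j ∧ j < k ∧ k < m ∧ m < l.length ∧
    l.getD i 0 < l.getD j 0 ∧ l.getD j 0 = l.getD k 0 ∧ l.getD k 0 < l.getD m 0

theorem zip_tail_concat : ∀ (l : List ℕ) (h : l ≠ []) (y : ℕ),
    (l ++ [y]).zip (l ++ [y]).tail = l.zip l.tail ++ [(l.getLast h, y)]
  | [], h, y => absurd rfl h
  | [a], _, y => by simp [List.zip]
  | a :: b :: t, _, y => by
    have := zip_tail_concat (b :: t) (by simp) y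
    simp only [List.cons_append, List.tail_cons, List.zip_cons_cons] at this ⊢
    rw [this]
    simp [List.getLast_cons]

theorem ascList_concat (l : List ℕ) (h : l ≠ []) (y : ℕ) :
    ascList (l ++ [y]) = ascList l + (if l.getLast h < y then 1 else 0) := by
  rw [ascList, zip_tail_concat l h y, List.countP_append, ascList]
  simp [List.countP_cons]

theorem ascList_le_filter (l : List ℕ) :
    ascList l ≤ (l.filter (fun x => decide (x ≠ 0))).length := by
  have h1 : ascList l ≤ (l.zip l.tail).countP (fun p => decide (p.2 ≠ 0)) := by
    apply List.countP_mono_left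
    intro p _ hp
    simp at hp ⊢
    omega
  have h2 : (l.zip l.tail).countP (fun p => decide (p.2 ≠ 0))
      = l.tail.countP (fun x => decide (x ≠ 0)) := by
    conv_rhs => rw [← List.map_snd_zip (l₁ := l) (l₂ := l.tail) (by cases l <;> simp)]
    rw [List.countP_map]
    rfl
  have h3 : l.tail.countP (fun x => decide (x ≠ 0)) ≤ l.countP (fun x => decide (x ≠ 0)) :=
    (List.tail_sublist l).countP_le
  simp only [List.countP_eq_length_filter] at h1 h2 h3
  omega

theorem contains_of_sublist (l : List ℕ) (v w : ℕ) (hv : 0 < v) (hw : v < w)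
    (h : [0, v, v, w].Sublist l) : Contains0112 l := by
  obtain ⟨is, his, hp⟩ := List.sublist_eq_map_getElem h
  have hlen : is.length = 4 := by
    have := congrArg List.length his; simpa using this.symm
  rcases is with _ | ⟨a, _ | ⟨b, _ | ⟨c, _ | ⟨e, _ | ⟨f, r⟩⟩⟩⟩⟩ <;> simp at hlen
  simp only [List.map_cons, List.map_nil] at his
  have h0 : (0 : ℕ) = l.get a := by injection his
  have h1 : v = l.get b := by injection his with _ his; injection his
  have h2 : v = l.get c := by
    injection his with _ his; injection his with _ his; injection his
  have h3 : w = l.get e := by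
    injection his with _ his; injection his with _ his; injection his with _ his
    injection his
  simp only [List.pairwise_cons, List.mem_cons] at hp
  refine ⟨a, b, c, e, ?_, ?_, ?_, e.isLt, ?_, ?_, ?_⟩
  · exact hp.1 b (by simp)
  · exact hp.2.1 c (by simp)
  · exact hp.2.2.1 e (by simp)
  · rw [List.getD_eq_getElem l 0 (by omega), List.getD_eq_getElem l 0 (by omega)]
    rw [List.get_eq_getElem] at h0 h1
    omega
  · rw [List.getD_eq_getElem l 0 (by omega), List.getD_eq_getElem l 0 (by omega)]
    rw [List.get_eq_getElem] at h1 h2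
    omega
  · rw [List.getD_eq_getElem l 0 (by omega), List.getD_eq_getElem l 0 (by omega)]
    rw [List.get_eq_getElem] at h2 h3
    omega

theorem sublist_of_contains (l : List ℕ) (h : Contains0112 l) :
    ∃ v w, 0 < v ∧ v < w ∧ [v, v, w].Sublist l := by
  obtain ⟨i, j, k, m, hij, hjk, hkm, hm, hx1, hx2, hx3⟩ := h
  have hj : j < l.length := by omega
  have hk : k < l.length := by omega
  refine ⟨l.getD j 0, l.getD m 0, by omega, by omega, ?_⟩
  have e1 : l.getD j 0 = l[j] := List.getD_eq_getElem l 0 hj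
  have e2 : l.getD k 0 = l[k] := List.getD_eq_getElem l 0 hk
  have e3 : l.getD m 0 = l[m] := List.getD_eq_getElem l 0 hm
  rw [e1, e3]
  nth_rewrite 2 [show l[j] = l[k] by rw [← e1, ← e2]; exact hx2]
  have := List.map_getElem_sublist (l := l) (is := [⟨j, hj⟩, ⟨k, hk⟩, ⟨m, hm⟩])
    (by simp [List.pairwise_cons]; omega)
  simpa using this

theorem avoid_of_shape (l : List ℕ) (k : ℕ) (d : List ℕ)
    (hf : l.filter (fun x => decide (x ≠ 0)) = (List.range k).map (· + 1) ++ d)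
    (hs : d.Pairwise (· ≥ ·)) : ¬ Contains0112 l := by
  intro h
  obtain ⟨v, w, hv, hvw, hsub⟩ := sublist_of_contains l h
  have hfil : [v, v, w].filter (fun x => decide (x ≠ 0)) = [v, v, w] := by
    simp; omega
  have hsub2 : [v, v, w].Sublist ((List.range k).map (· + 1) ++ d) := by
    rw [← hf, ← hfil]; exact hsub.filter _
  rw [List.sublist_append_iff] at hsub2
  obtain ⟨r1, r2, heq, h1, h2⟩ := hsub2
  have nodup : ((List.range k).map (· + 1)).Nodup :=
    (List.nodup_range (n := k)).map (fun a b h => by omega)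
  rcases r1 with _ | ⟨x1, _ | ⟨x2, _ | ⟨x3, _ | ⟨x4, r⟩⟩⟩⟩
  · simp at heq
    subst heq
    have := List.Pairwise.sublist h2 hs
    simp [List.pairwise_cons] at this
    omega
  · simp at heq
    obtain ⟨e1, hr2⟩ := heq
    rw [← hr2] at h2
    have := List.Pairwise.sublist h2 hs
    simp [List.pairwise_cons] at this
    omega
  · simp at heq
    obtain ⟨e1, e2, hr2⟩ := heq
    subst e1; subst e2
    have := List.Pairwise.sublist h1 nodup
    simp [List.pairwise_cons] at this
  · simp at heq
    obtain ⟨e1, e2, e3, hr2⟩ := heq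
    subst e1; subst e2
    have := List.Pairwise.sublist h1 nodup
    simp [List.pairwise_cons] at this
  · simp at heq

theorem sorted_getLast_le : ∀ (d : List ℕ), d.Pairwise (· ≥ ·) → ∀ (h : d ≠ []),
    ∀ a ∈ d, d.getLast h ≤ a
  | [], _, h, _, _ => absurd rfl h
  | [a], _, _, b, hb => by simp_all
  | a :: b :: t, hs, _, x, hx => by
    have hs' : (b :: t).Pairwise (· ≥ ·) := hs.of_cons
    rw [List.getLast_cons (by simp)]
    rcases List.mem_cons.1 hx with rfl | hx'
    · calc (b :: t).getLast (by simp) ≤ b := sorted_getLast_le _ hs' (by simp) b (by simp)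
      _ ≤ x := (List.pairwise_cons.1 hs).1 b (by simp)
    · exact sorted_getLast_le _ hs' (by simp) x hx'

theorem isAscSeq_concat_elim (l : List ℕ) (y : ℕ) (hl : l ≠ [])
    (h : IsAscSeq (l ++ [y])) : IsAscSeq l ∧ y ≤ ascList l + 1 := by
  obtain ⟨-, h0, hcond⟩ := h
  have hlen : 0 < l.length := List.length_pos_iff.2 hl
  constructor
  · refine ⟨hl, ?_, ?_⟩
    · rwa [List.getD_append l [y] 0 0 hlen] at h0
    · intro i hi hil
      have := hcond i hi (by simp; omega)
      rwa [List.getD_append l [y] 0 i hil, List.take_append_of_le_length (by omega)] at this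
  · have := hcond l.length hlen (by simp)
    rwa [List.getD_append_right l [y] 0 l.length le_rfl, Nat.sub_self,
      List.take_left] at this
    
theorem not_contains_prefix {l : List ℕ} {y : ℕ} (h : ¬ Contains0112 (l ++ [y])) :
    ¬ Contains0112 l := by
  intro ⟨i, j, k, m, hij, hjk, hkm, hm, h1, h2, h3⟩
  refine h ⟨i, j, k, m, hij, hjk, hkm, by simp; omega, ?_, ?_, ?_⟩ <;>
    rw [List.getD_append l [y] 0 _ (by omega), List.getD_append l [y] 0 _ (by omega)] <;>
    assumption

theorem shape_of_avoid (l : List ℕ) (ha : IsAscSeq l) (hav : ¬ Contains0112 l) :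
    ∃ k d, l.filter (fun x => decide (x ≠ 0)) = (List.range k).map (· + 1) ++ d ∧
      d.Pairwise (· ≥ ·) ∧ ∀ x ∈ d, x ≤ k := by
  induction l using List.reverseRecOn with
  | nil => exact absurd rfl ha.1
  | append_singleton l y IH =>
    rcases eq_or_ne l [] with rfl | hl
    · have hy : y = 0 := by simpa using ha.2.1
      subst hy
      exact ⟨0, [], by simp, by simp, by simp⟩
    obtain ⟨ha', hy⟩ := isAscSeq_concat_elim l y hl ha
    have hav' := not_contains_prefix hav
    obtain ⟨k, d, hfk, hsort, hbound⟩ := IH ha' hav'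
    rcases eq_or_ne y 0 with rfl | hy0
    · exact ⟨k, d, by rw [List.filter_append, ← hfk]; simp, hsort, hbound⟩
    have hfl : (l ++ [y]).filter (fun x => decide (x ≠ 0))
        = (List.range k).map (· + 1) ++ d ++ [y] := by
      rw [List.filter_append, hfk]; simp [hy0]
    rcases eq_or_ne d [] with rfl | hd
    · have hasc : ascList l ≤ k := by
        have := ascList_le_filter l
        rw [hfk] at this; simpa using this
      rcases eq_or_ne y (k + 1) with rfl | hyk
      · refine ⟨k + 1, [], ?_, by simp, by simp⟩
        rw [hfl, List.range_succ]
        simp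
      · refine ⟨k, [y], by rw [hfl]; simp, by simp, by simp; omega⟩
    · set v := d.getLast hd with hv
      have hvd : v ∈ d := List.getLast_mem hd
      have hvf : v ∈ l.filter (fun x => decide (x ≠ 0)) := by
        rw [hfk]; exact List.mem_append_right _ hvd
      have hv0 : v ≠ 0 := by
        have := (List.mem_filter.1 hvf).2; simpa using this
      have hvk : v ≤ k := hbound v hvd
      have hyv : y ≤ v := by
        by_contra hvy
        push_neg at hvy
        have hvu : v ∈ (List.range k).map (· + 1) :=
          List.mem_map.2 ⟨v - 1, List.mem_range.2 (by omega), by omega⟩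
        have hvv : [v, v].Sublist (l.filter (fun x => decide (x ≠ 0))) := by
          rw [hfk]
          exact List.Sublist.append (List.singleton_sublist.2 hvu)
            (List.singleton_sublist.2 hvd)
        have hvvl : [v, v].Sublist l := hvv.trans List.filter_sublist
        obtain ⟨t, rfl⟩ : ∃ t, l = 0 :: t := by
          rcases l with _ | ⟨a, t⟩
          · exact absurd rfl hl
          · have : a = 0 := by simpa using ha'.2.1
            exact ⟨t, by rw [this]⟩
        have hvt : [v, v].Sublist t := by
          rcases List.sublist_cons_iff.1 hvvl with h' | ⟨r, hr, _⟩
          · exact h'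
          · simp at hr; omega
        have : [0, v, v, y].Sublist (0 :: t ++ [y]) :=
          List.Sublist.append (List.cons_sublist_cons.2 hvt) (List.Sublist.refl [y])
        exact hav (contains_of_sublist _ v y (by omega) hvy this)
      refine ⟨k, d ++ [y], by rw [hfl, List.append_assoc], ?_, ?_⟩
      · rw [List.pairwise_append]
        refine ⟨hsort, by simp, ?_⟩
        intro a ha' b hb
        simp at hb; subst hb
        exact le_trans hyv (sorted_getLast_le d hsort hd a ha')
      · intro x hx
        rcases List.mem_append.1 hx with hx' | hx'
        · exact hbound x hx'
        · simp at hx'; omega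

theorem concat_inj {a b : List ℕ} {x y : ℕ} (h : a ++ [x] = b ++ [y]) : a = b ∧ x = y := by
  have h1 := congrArg List.dropLast h
  simp at h1
  have h2 := congrArg List.getLast? h
  rw [List.getLast?_concat, List.getLast?_concat] at h2
  exact ⟨h1, by injection h2⟩

theorem isAscSeq_concat (l : List ℕ) (y : ℕ) (h : IsAscSeq l)
    (hy : y ≤ ascList l + 1) : IsAscSeq (l ++ [y]) := by
  obtain ⟨hne, h0, hcond⟩ := h
  have hlen : 0 < l.length := List.length_pos_iff.2 hne
  refine ⟨by simp, by rwa [List.getD_append l [y] 0 0 hlen], ?_⟩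
  intro i hi hil
  simp only [List.length_append, List.length_singleton] at hil
  rcases lt_or_ge i l.length with hlt | hge
  · rw [List.getD_append l [y] 0 i hlt, List.take_append_of_le_length (by omega)]
    exact hcond i hi hlt
  · have hi' : i = l.length := by omega
    subst hi'
    rwa [List.getD_append_right l [y] 0 l.length le_rfl, Nat.sub_self, List.take_left]

theorem ascList_concat_ge (l : List ℕ) (y : ℕ) : ascList l ≤ ascList (l ++ [y]) := by
  rcases eq_or_ne l [] with rfl | hne
  · simp [ascList]
  · rw [ascList_concat l hne y]; omega

theorem ascSeq_of_shape (l : List ℕ) : ∀ (k : ℕ) (d : List ℕ), l ≠ [] → l.getD 0 0 = 0 →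
    l.filter (fun x => decide (x ≠ 0)) = (List.range k).map (· + 1) ++ d →
    d.Pairwise (· ≥ ·) → (∀ x ∈ d, x ≤ k) → IsAscSeq l ∧ k ≤ ascList l := by
  induction l using List.reverseRecOn with
  | nil => intro k d h; exact absurd rfl h
  | append_singleton l y IH =>
    intro k d hne h0 hf hsort hbound
    rcases eq_or_ne l [] with rfl | hl
    · have hy : y = 0 := by simpa using h0
      subst hy
      simp at hf
      obtain ⟨rfl, rfl⟩ := hf
      refine ⟨⟨by simp, by simp, ?_⟩, by simp⟩
      intro i hi hil
      simp at hil
      omega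
    have h0' : l.getD 0 0 = 0 := by
      rwa [List.getD_append l [y] 0 0 (List.length_pos_iff.2 hl)] at h0
    rcases eq_or_ne y 0 with rfl | hy0
    · have hf' : l.filter (fun x => decide (x ≠ 0)) = (List.range k).map (· + 1) ++ d := by
        rw [← hf, List.filter_append]; simp
      obtain ⟨ha, hk⟩ := IH k d hl h0' hf' hsort hbound
      exact ⟨isAscSeq_concat l 0 ha (by omega), le_trans hk (ascList_concat_ge l 0)⟩
    have hfeq : l.filter (fun x => decide (x ≠ 0)) ++ [y]
        = (List.range k).map (· + 1) ++ d := by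
      rw [← hf, List.filter_append]; simp [hy0]
    rcases eq_or_ne d [] with rfl | hd
    · -- d = [] : y = k, last of the increasing run
      have hk : 0 < k := by
        by_contra hk
        have : k = 0 := by omega
        subst this
        simp at hfeq
      obtain ⟨m, rfl⟩ : ∃ m, k = m + 1 := ⟨k - 1, by omega⟩
      rw [List.append_nil, List.range_succ, List.map_append] at hfeq
      obtain ⟨hfl, rfl⟩ := concat_inj hfeq
      obtain ⟨ha, hm⟩ := IH m [] hl h0' (by rw [List.append_nil]; exact hfl) (by simp) (by simp)
      refine ⟨isAscSeq_concat l (m + 1) ha (by omega), ?_⟩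
      rw [ascList_concat l hl (m + 1)]
      have hlast : l.getLast hl < m + 1 := by
        rcases eq_or_ne (l.getLast hl) 0 with hz | hz
        · omega
        · have hdec : l = l.dropLast ++ [l.getLast hl] := (List.dropLast_append_getLast hl).symm
          have : l.filter (fun x => decide (x ≠ 0))
              = l.dropLast.filter (fun x => decide (x ≠ 0)) ++ [l.getLast hl] := by
            conv_lhs => rw [hdec]
            rw [List.filter_append]; simp [hz]
          rw [this] at hfl
          rcases Nat.eq_zero_or_pos m with rfl | hm0
          · simp at hfl
          · obtain ⟨m', rfl⟩ : ∃ m', m = m' + 1 := ⟨m - 1, by omega⟩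
            rw [List.range_succ, List.map_append] at hfl
            obtain ⟨-, h2⟩ := concat_inj hfl
            simp only [List.map_cons, List.map_nil] at h2
            omega
      rw [if_pos hlast]
      omega
    · -- d ≠ [] : y is the last of d
      have hd' : d = d.dropLast ++ [d.getLast hd] := (List.dropLast_append_getLast hd).symm
      rw [hd', ← List.append_assoc] at hfeq
      obtain ⟨hfl, hyl⟩ := concat_inj hfeq
      obtain ⟨ha, hk⟩ := IH k d.dropLast hl h0' hfl
        (List.Pairwise.sublist (List.dropLast_sublist d) hsort)
        (fun x hx => hbound x ((List.dropLast_sublist d).subset hx))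
      have hyk : y ≤ k := hyl ▸ hbound _ (List.getLast_mem hd)
      exact ⟨isAscSeq_concat l y ha (by omega), le_trans hk (ascList_concat_ge l y)⟩

def mergeL : List Bool → List ℕ → List ℕ
  | [], _ => []
  | false :: bs, w => 0 :: mergeL bs w
  | true :: bs, [] => 0 :: mergeL bs []
  | true :: bs, x :: w => x :: mergeL bs w

theorem mergeL_length : ∀ (bs : List Bool) (w : List ℕ), (mergeL bs w).length = bs.length
  | [], _ => rfl
  | false :: bs, w => by simp [mergeL, mergeL_length]
  | true :: bs, [] => by simp [mergeL, mergeL_length]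
  | true :: bs, x :: w => by simp [mergeL, mergeL_length]

theorem mergeL_filter : ∀ (bs : List Bool) (w : List ℕ), w.length = bs.count true →
    (∀ x ∈ w, x ≠ 0) → (mergeL bs w).filter (fun x => decide (x ≠ 0)) = w
  | [], w, h, _ => by
    have : w = [] := List.length_eq_zero_iff.1 (by simpa using h)
    subst this; rfl
  | false :: bs, w, h, hnz => by
    simp only [mergeL, List.filter_cons]
    simpa using mergeL_filter bs w (by simpa [List.count_cons] using h) hnz
  | true :: bs, [], h, hnz => by simp [List.count_cons] at h
  | true :: bs, x :: w, h, hnz => by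
    have hx : x ≠ 0 := hnz x (by simp)
    simp only [mergeL, List.filter_cons]
    rw [if_pos (by simpa using hx)]
    rw [mergeL_filter bs w (by simpa [List.count_cons] using h) (fun a ha => hnz a (by simp [ha]))]

theorem mergeL_mask : ∀ (bs : List Bool) (w : List ℕ), w.length = bs.count true →
    (∀ x ∈ w, x ≠ 0) → (mergeL bs w).map (fun x => decide (x ≠ 0)) = bs
  | [], w, h, _ => rfl
  | false :: bs, w, h, hnz => by
    simp only [mergeL, List.map_cons]
    rw [mergeL_mask bs w (by simpa [List.count_cons] using h) hnz]
    simp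
  | true :: bs, [], h, hnz => by simp [List.count_cons] at h
  | true :: bs, x :: w, h, hnz => by
    have hx : x ≠ 0 := hnz x (by simp)
    simp only [mergeL, List.map_cons]
    rw [mergeL_mask bs w (by simpa [List.count_cons] using h) (fun a ha => hnz a (by simp [ha]))]
    simp [hx]

theorem mergeL_split : ∀ (t : List ℕ),
    mergeL (t.map (fun x => decide (x ≠ 0))) (t.filter (fun x => decide (x ≠ 0))) = t
  | [] => rfl
  | x :: t => by
    rcases eq_or_ne x 0 with rfl | hx
    · simpa [mergeL] using mergeL_split t
    · simp only [List.map_cons, List.filter_cons]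
      rw [if_pos (by simpa using hx), show (decide (x ≠ 0)) = true by simpa using hx]
      simpa [mergeL] using mergeL_split t

theorem count_mask : ∀ (t : List ℕ),
    (t.map (fun x => decide (x ≠ 0))).count true = (t.filter (fun x => decide (x ≠ 0))).length
  | [] => rfl
  | x :: t => by
    rcases eq_or_ne x 0 with rfl | hx
    · simpa [List.count_cons] using count_mask t
    · simp only [List.map_cons, List.filter_cons]
      rw [show (decide (x ≠ 0)) = true by simpa using hx]
      simpa [List.count_cons] using count_mask t

def Masks : ℕ → Finset (List Bool)
  | 0 => {[]}
  | N + 1 => ((Masks N).image (true :: ·)) ∪ ((Masks N).image (false :: ·))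

theorem mem_Masks : ∀ (N : ℕ) (bs : List Bool), bs ∈ Masks N ↔ bs.length = N
  | 0, bs => by simp [Masks, List.length_eq_zero_iff]
  | N + 1, [] => by simp [Masks]
  | N + 1, b :: bs => by
    simp only [Masks, Finset.mem_union, Finset.mem_image]
    constructor
    · rintro (⟨a, ha, he⟩ | ⟨a, ha, he⟩) <;>
      · injection he with h1 h2
        subst h2
        simp [(mem_Masks N a).1 ha]
    · intro h
      simp at h
      cases b
      · exact Or.inr ⟨bs, (mem_Masks N bs).2 h, rfl⟩
      · exact Or.inl ⟨bs, (mem_Masks N bs).2 h, rfl⟩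

theorem masks_sum : ∀ (N : ℕ) (g : ℕ → ℕ),
    ∑ bs ∈ Masks N, g (bs.count true) = ∑ m ∈ Finset.range (N + 1), N.choose m * g m := by
  intro N
  induction N with
  | zero => intro g; simp [Masks]
  | succ N IH =>
    intro g
    have hdisj : Disjoint ((Masks N).image (true :: ·)) ((Masks N).image (false :: ·)) := by
      rw [Finset.disjoint_left]
      intro a ha hb
      obtain ⟨x, -, rfl⟩ := Finset.mem_image.1 ha
      obtain ⟨y, -, he⟩ := Finset.mem_image.1 hb
      simp at he
    rw [Masks, Finset.sum_union hdisj,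
      Finset.sum_image (by intro x _ y _ h; injection h),
      Finset.sum_image (by intro x _ y _ h; injection h)]
    have e1 : ∀ bs : List Bool, (true :: bs).count true = bs.count true + 1 := by
      intro bs; simp [List.count_cons]
    have e2 : ∀ bs : List Bool, (false :: bs).count true = bs.count true := by
      intro bs; simp [List.count_cons]
    simp only [e1, e2]
    rw [IH (fun m => g (m + 1)), IH g]
    rw [Finset.sum_range_succ' (fun m => (N + 1).choose m * g m) (N + 1)]
    simp only [Nat.choose_succ_succ, Nat.choose_zero_right, one_mul, add_mul]
    rw [Finset.sum_add_distrib]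
    simp only [Nat.succ_eq_add_one]
    have e3 : ∑ i ∈ Finset.range (N + 1), N.choose (i + 1) * g (i + 1) + g 0
        = ∑ m ∈ Finset.range (N + 1), N.choose m * g m := by
      rw [Finset.sum_range_succ (fun i => N.choose (i + 1) * g (i + 1)) N,
        Nat.choose_succ_self, zero_mul, add_zero,
        Finset.sum_range_succ' (fun m => N.choose m * g m) N]
      simp
    omega

def Dfin : ℕ → ℕ → Finset (List ℕ)
  | _, 0 => {[]}
  | 0, _ + 1 => ∅
  | k + 1, L + 1 => Dfin k (L + 1) ∪ (Dfin (k + 1) L).image ((k + 1) :: ·)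
termination_by k L => k + L

theorem Dfin_succ_succ (k L : ℕ) :
    Dfin (k + 1) (L + 1) = Dfin k (L + 1) ∪ (Dfin (k + 1) L).image ((k + 1) :: ·) := by
  rw [Dfin]

theorem mem_Dfin : ∀ (k L : ℕ) (d : List ℕ), d ∈ Dfin k L ↔
    d.length = L ∧ d.Pairwise (· ≥ ·) ∧ ∀ x ∈ d, 1 ≤ x ∧ x ≤ k := by
  intro k
  induction k with
  | zero =>
    intro L d
    cases L with
    | zero =>
      simp only [Dfin, Finset.mem_singleton]
      constructor
      · rintro rfl; simp
      · rintro ⟨h, -, -⟩; exact List.length_eq_zero_iff.1 h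
    | succ L =>
      simp only [Dfin, Finset.notMem_empty, false_iff]
      rintro ⟨hlen, -, hb⟩
      rcases d with _ | ⟨a, d⟩
      · simp at hlen
      · have := hb a (by simp); omega
  | succ k IHk =>
    intro L
    induction L with
    | zero =>
      intro d
      simp only [Dfin, Finset.mem_singleton]
      constructor
      · rintro rfl; simp
      · rintro ⟨h, -, -⟩; exact List.length_eq_zero_iff.1 h
    | succ L IHL =>
      intro d
      simp only [Dfin, Finset.mem_union, Finset.mem_image]
      constructor
      · rintro (h | ⟨d', hd', rfl⟩)
        · obtain ⟨h1, h2, h3⟩ := (IHk (L + 1) d).1 h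
          exact ⟨h1, h2, fun x hx => ⟨(h3 x hx).1, le_trans (h3 x hx).2 (by omega)⟩⟩
        · obtain ⟨h1, h2, h3⟩ := (IHL d').1 hd'
          refine ⟨by simp [h1], ?_, ?_⟩
          · rw [List.pairwise_cons]
            exact ⟨fun b hb => (h3 b hb).2, h2⟩
          · rintro x hx
            rcases List.mem_cons.1 hx with rfl | hx'
            · omega
            · exact ⟨(h3 x hx').1, le_trans (h3 x hx').2 (by omega)⟩
      · rintro ⟨hlen, hsort, hb⟩
        rcases d with _ | ⟨a, d⟩
        · simp at hlen
        · rcases eq_or_lt_of_le (hb a (by simp)).2 with ha | ha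
          · refine Or.inr ⟨d, (IHL d).2 ⟨by simpa using hlen, (List.pairwise_cons.1 hsort).2,
              fun x hx => (hb x (by simp [hx]))⟩, by rw [ha]⟩
          · refine Or.inl ((IHk (L + 1) (a :: d)).2 ⟨hlen, hsort, ?_⟩)
            rintro x hx
            rcases List.mem_cons.1 hx with rfl | hx'
            · exact ⟨(hb x (by simp)).1, by omega⟩
            · have := (List.pairwise_cons.1 hsort).1 x hx'
              exact ⟨(hb x (by simp [hx'])).1, by omega⟩

theorem card_Dfin : ∀ (k L : ℕ), (Dfin (k + 1) L).card = (k + L).choose L := by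
  intro k
  induction k with
  | zero =>
    intro L
    induction L with
    | zero => simp [Dfin]
    | succ L IHL =>
      rw [Dfin_succ_succ 0 L, show Dfin 0 (L + 1) = ∅ by rw [Dfin], Finset.empty_union,
        Finset.card_image_of_injective _ (fun a b h => by injection h), IHL]
      simp
  | succ k IHk =>
    intro L
    induction L with
    | zero => simp [Dfin]
    | succ L IHL =>
      rw [Dfin_succ_succ (k + 1) L]
      have hdisj : Disjoint (Dfin (k + 1) (L + 1)) ((Dfin (k + 2) L).image ((k + 2) :: ·)) := by
        rw [Finset.disjoint_left]
        intro a ha hb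
        obtain ⟨d', -, rfl⟩ := Finset.mem_image.1 hb
        have := ((mem_Dfin (k + 1) (L + 1) _).1 ha).2.2 (k + 2) (by simp)
        omega
      rw [Finset.card_union_of_disjoint hdisj,
        Finset.card_image_of_injective _ (fun a b h => by injection h), IHk (L + 1), IHL]
      have : k + 1 + (L + 1) = (k + 1 + L) + 1 := by omega
      rw [this, Nat.choose_succ_succ (k + 1 + L) L]
      simp only [Nat.succ_eq_add_one]
      have e1 : k + (L + 1) = k + 1 + L := by omega
      rw [e1]
      omega

def Wfin (m : ℕ) : Finset (List ℕ) :=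
  if m = 0 then {[]}
  else (Finset.Icc 1 m).biUnion fun k => (Dfin k (m - k)).image ((List.range k).map (· + 1) ++ ·)

theorem mem_rangeMap (k x : ℕ) : x ∈ (List.range k).map (· + 1) ↔ 1 ≤ x ∧ x ≤ k := by
  simp [List.mem_map, List.mem_range]
  constructor
  · rintro ⟨a, ha, rfl⟩; omega
  · rintro ⟨h1, h2⟩; exact ⟨x - 1, by omega, by omega⟩

theorem mem_Wfin (m : ℕ) (w : List ℕ) : w ∈ Wfin m ↔ w.length = m ∧
    ∃ k d, w = (List.range k).map (· + 1) ++ d ∧ d.Pairwise (· ≥ ·) ∧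
      ∀ x ∈ d, 1 ≤ x ∧ x ≤ k := by
  rw [Wfin]
  split_ifs with hm
  · subst hm
    simp only [Finset.mem_singleton]
    constructor
    · rintro rfl
      exact ⟨rfl, 0, [], by simp, by simp, by simp⟩
    · rintro ⟨hlen, -⟩
      exact List.length_eq_zero_iff.1 hlen
  · rw [Finset.mem_biUnion]
    constructor
    · rintro ⟨k, hk, hw⟩
      obtain ⟨d, hd, rfl⟩ := Finset.mem_image.1 hw
      obtain ⟨h1, h2, h3⟩ := (mem_Dfin k (m - k) d).1 hd
      simp only [Finset.mem_Icc] at hk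
      refine ⟨?_, k, d, rfl, h2, h3⟩
      simp [h1]
      omega
    · rintro ⟨hlen, k, d, rfl, hsort, hb⟩
      have hk1 : 1 ≤ k := by
        by_contra hk
        have : k = 0 := by omega
        subst this
        simp at hlen
        rcases d with _ | ⟨a, d⟩
        · simp at hlen; omega
        · have := hb a (by simp)
          simp at hlen
          omega
      have hlen' : k + d.length = m := by simpa using hlen
      refine ⟨k, Finset.mem_Icc.2 ⟨hk1, by omega⟩, Finset.mem_image.2 ⟨d, ?_, rfl⟩⟩
      exact (mem_Dfin k (m - k) d).2 ⟨by omega, hsort, hb⟩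

theorem wfin_nonzero {m : ℕ} {w : List ℕ} (h : w ∈ Wfin m) : ∀ x ∈ w, x ≠ 0 := by
  obtain ⟨-, k, d, rfl, -, hb⟩ := (mem_Wfin m w).1 h
  intro x hx
  rcases List.mem_append.1 hx with hx' | hx'
  · have := (mem_rangeMap k x).1 hx'; omega
  · have := hb x hx'; omega

theorem card_Wfin (m : ℕ) (hm : 1 ≤ m) :
    (Wfin m).card = ∑ i ∈ Finset.Icc 1 m, (m - 1).choose (m - i) := by
  rw [Wfin, if_neg (by omega)]
  rw [Finset.card_biUnion]
  · apply Finset.sum_congr rfl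
    intro k hk
    simp only [Finset.mem_Icc] at hk
    rw [Finset.card_image_of_injective _ (fun a b h => by simpa using h)]
    obtain ⟨j, rfl⟩ : ∃ j, k = j + 1 := ⟨k - 1, by omega⟩
    rw [card_Dfin j (m - (j + 1))]
    congr 1
    omega
  · intro k hk k' hk' hne
    simp only [Finset.mem_coe, Finset.coe_Icc, Set.mem_Icc, Finset.mem_Icc] at hk hk'
    rw [Function.onFun, Finset.disjoint_left]
    intro a ha ha'
    obtain ⟨d, hd, rfl⟩ := Finset.mem_image.1 ha
    obtain ⟨d', hd', he⟩ := Finset.mem_image.1 ha'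
    have hb := ((mem_Dfin k _ d).1 hd).2.2
    have hb' := ((mem_Dfin k' _ d').1 hd').2.2
    have hmem : ∀ x ∈ (List.range k).map (· + 1) ++ d, x ≤ k := by
      intro x hx
      rcases List.mem_append.1 hx with hx' | hx'
      · exact ((mem_rangeMap k x).1 hx').2
      · exact (hb x hx').2
    have hmem' : ∀ x ∈ (List.range k').map (· + 1) ++ d', x ≤ k' := by
      intro x hx
      rcases List.mem_append.1 hx with hx' | hx'
      · exact ((mem_rangeMap k' x).1 hx').2
      · exact (hb' x hx').2
    have h1 : k' ≤ k := hmem k' (by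
      rw [← he]
      exact List.mem_append_left _ ((mem_rangeMap k' k').2 ⟨hk'.1, le_rfl⟩))
    have h2 : k ≤ k' := by
      have := hmem' k (he ▸ List.mem_append_left _ ((mem_rangeMap k k).2 ⟨hk.1, le_rfl⟩))
      exact this
    omega

theorem innerSumEq (k : ℕ) (hk : 1 ≤ k) :
    ∑ i ∈ Finset.Icc 1 k, (k - 1).choose (k - i) = 2 ^ (k - 1) := by
  rw [← Finset.Ico_add_one_right_eq_Icc, Finset.sum_Ico_eq_sum_range]
  have e1 : k + 1 - 1 = k := by omega
  rw [e1]
  have e2 : ∀ i ∈ Finset.range k, (k - 1).choose (k - (1 + i)) = (k - 1).choose (k - 1 - i) := by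
    intro i hi
    congr 1
    omega
  rw [Finset.sum_congr rfl e2, Finset.sum_range_reflect (fun i => (k - 1).choose i) k]
  obtain ⟨j, rfl⟩ : ∃ j, k = j + 1 := ⟨k - 1, by omega⟩
  simpa using Nat.sum_range_choose j

theorem two_mul_main (N : ℕ) :
    2 * (1 + ∑ k ∈ Finset.Icc 1 N, N.choose k * 2 ^ (k - 1)) = 3 ^ N + 1 := by
  have h1 : ∑ k ∈ Finset.Icc 1 N, 2 * (N.choose k * 2 ^ (k - 1))
      = ∑ k ∈ Finset.Icc 1 N, N.choose k * 2 ^ k := by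
    apply Finset.sum_congr rfl
    intro k hk
    simp only [Finset.mem_Icc] at hk
    obtain ⟨j, rfl⟩ : ∃ j, k = j + 1 := ⟨k - 1, by omega⟩
    simp only [Nat.add_sub_cancel]
    ring
  have h2 : (3 : ℕ) ^ N = ∑ k ∈ Finset.range (N + 1), N.choose k * 2 ^ k := by
    have := add_pow (2 : ℕ) 1 N
    simp only [one_pow, mul_one] at this
    norm_num at this
    rw [this]
    apply Finset.sum_congr rfl
    intro k hk
    ring
  have h3 : ∑ k ∈ Finset.range (N + 1), N.choose k * 2 ^ k
      = 1 + ∑ k ∈ Finset.Icc 1 N, N.choose k * 2 ^ k := by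
    rw [Finset.sum_range_succ' (fun k => N.choose k * 2 ^ k) N]
    rw [← Finset.Ico_add_one_right_eq_Icc, Finset.sum_Ico_eq_sum_range]
    have e1 : N + 1 - 1 = N := by omega
    rw [e1]
    simp only [Nat.choose_zero_right, pow_zero, mul_one]
    have : ∀ i ∈ Finset.range N, N.choose (1 + i) * 2 ^ (1 + i)
        = N.choose (i + 1) * 2 ^ (i + 1) := by
      intro i hi
      rw [add_comm 1 i]
    rw [Finset.sum_congr rfl this]
    omega
  rw [mul_add, mul_one, Finset.mul_sum, h1]
  omega

def Tfin (n : ℕ) : Finset (List ℕ) :=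
  (Masks (n - 1)).biUnion fun bs => (Wfin (bs.count true)).image fun w => 0 :: mergeL bs w

theorem mem_Tfin (n : ℕ) (hn : 1 ≤ n) (l : List ℕ) : l ∈ Tfin n ↔
    l.length = n ∧ l.getD 0 0 = 0 ∧ ∃ k d,
      l.filter (fun x => decide (x ≠ 0)) = (List.range k).map (· + 1) ++ d ∧
      d.Pairwise (· ≥ ·) ∧ ∀ x ∈ d, 1 ≤ x ∧ x ≤ k := by
  rw [Tfin, Finset.mem_biUnion]
  constructor
  · rintro ⟨bs, hbs, hl⟩
    obtain ⟨w, hw, rfl⟩ := Finset.mem_image.1 hl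
    have hbslen := (mem_Masks _ bs).1 hbs
    have hwlen := ((mem_Wfin _ w).1 hw).1
    have hnz := wfin_nonzero hw
    have h00 : (decide ((0 : ℕ) ≠ 0)) = false := by simp
    have hfil : (0 :: mergeL bs w).filter (fun x => decide (x ≠ 0)) = w := by
      rw [List.filter_cons, h00]
      simp only [Bool.false_eq_true, if_false]
      exact mergeL_filter bs w hwlen hnz
    refine ⟨by simp [mergeL_length, hbslen]; omega, by simp, ?_⟩
    obtain ⟨-, k, d, hshape, hsort, hb⟩ := (mem_Wfin _ w).1 hw
    exact ⟨k, d, by rw [hfil, hshape], hsort, hb⟩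
  · rintro ⟨hlen, h0, k, d, hf, hsort, hb⟩
    obtain ⟨t, rfl⟩ : ∃ t, l = 0 :: t := by
      rcases l with _ | ⟨a, t⟩
      · simp at hlen; omega
      · have ha0 : a = 0 := by simpa using h0
        subst ha0
        exact ⟨t, rfl⟩
    refine ⟨t.map (fun x => decide (x ≠ 0)), (mem_Masks _ _).2 (by simp at hlen ⊢; omega), ?_⟩
    rw [Finset.mem_image]
    refine ⟨t.filter (fun x => decide (x ≠ 0)), ?_, by rw [mergeL_split t]⟩
    rw [mem_Wfin]
    have hft : (0 :: t).filter (fun x => decide (x ≠ 0)) = t.filter (fun x => decide (x ≠ 0)) := by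
      simp
    exact ⟨(count_mask t).symm, k, d, by rw [← hft, hf], hsort, hb⟩

theorem card_Tfin (n : ℕ) (hn : 1 ≤ n) : (Tfin n).card
    = 1 + ∑ k ∈ Finset.Icc 1 (n - 1), (n - 1).choose k *
        ∑ i ∈ Finset.Icc 1 k, (k - 1).choose (k - i) := by
  have hdisj : ∀ bs ∈ Masks (n - 1), ∀ bs' ∈ Masks (n - 1), bs ≠ bs' →
      Disjoint ((Wfin (bs.count true)).image fun w => 0 :: mergeL bs w)
        ((Wfin (bs'.count true)).image fun w => 0 :: mergeL bs' w) := by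
    intro bs _ bs' _ hne
    rw [Finset.disjoint_left]
    intro a ha ha'
    obtain ⟨w, hw, rfl⟩ := Finset.mem_image.1 ha
    obtain ⟨w', hw', he⟩ := Finset.mem_image.1 ha'
    have hm : mergeL bs' w' = mergeL bs w := by injection he
    apply hne
    calc bs = (mergeL bs w).map (fun x => decide (x ≠ 0)) :=
        (mergeL_mask bs w ((mem_Wfin _ w).1 hw).1 (wfin_nonzero hw)).symm
      _ = (mergeL bs' w').map (fun x => decide (x ≠ 0)) := by rw [hm]
      _ = bs' := mergeL_mask bs' w' ((mem_Wfin _ w').1 hw').1 (wfin_nonzero hw')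
  rw [Tfin, Finset.card_biUnion hdisj]
  have hcardim : ∀ bs ∈ Masks (n - 1),
      ((Wfin (bs.count true)).image fun w => 0 :: mergeL bs w).card
        = (Wfin (bs.count true)).card := by
    intro bs _
    apply Finset.card_image_of_injOn
    intro w hw w' hw' he
    have hm : mergeL bs w = mergeL bs w' := by injection he
    calc w = (mergeL bs w).filter (fun x => decide (x ≠ 0)) :=
        (mergeL_filter bs w ((mem_Wfin _ w).1 (by simpa using hw)).1
          (wfin_nonzero (by simpa using hw))).symm
      _ = (mergeL bs w').filter (fun x => decide (x ≠ 0)) := by rw [hm]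
      _ = w' := mergeL_filter bs w' ((mem_Wfin _ w').1 (by simpa using hw')).1
          (wfin_nonzero (by simpa using hw'))
  rw [Finset.sum_congr rfl hcardim, masks_sum (n - 1) (fun m => (Wfin m).card)]
  rw [Finset.sum_range_succ' (fun m => (n - 1).choose m * (Wfin m).card) (n - 1)]
  have hW0 : (Wfin 0).card = 1 := by rw [Wfin]; simp
  have hIcc : ∑ k ∈ Finset.Icc 1 (n - 1), (n - 1).choose k *
      ∑ i ∈ Finset.Icc 1 k, (k - 1).choose (k - i)
      = ∑ i ∈ Finset.range (n - 1), (n - 1).choose (i + 1) * (Wfin (i + 1)).card := by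
    rw [← Finset.Ico_add_one_right_eq_Icc, Finset.sum_Ico_eq_sum_range]
    have e1 : n - 1 + 1 - 1 = n - 1 := by omega
    rw [e1]
    apply Finset.sum_congr rfl
    intro i _
    rw [add_comm 1 i, card_Wfin (i + 1) (by omega)]
  rw [hIcc, hW0]
  simp [Nat.add_comm]

/-- The 0112-avoiding ascent sequences of length `n` number `(3^(n-1)+1)/2`; the
corresponding binomial-sum identity holds; and these sequences are precisely the
strictly increasing sequence `0,1,…,k` followed by a weakly decreasing sequence with
letters at most `k`, arbitrarily interspersed with 0's (i.e., the nonzero letters form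
`1,…,k` followed by a weakly decreasing word of letters in `{1,…,k}`). -/
theorem stmt18 (n : ℕ) (hn : 1 ≤ n) :
    {l : List ℕ | l.length = n ∧ IsAscSeq l ∧ ¬ Contains0112 l}.ncard
        = (3 ^ (n - 1) + 1) / 2 ∧
    1 + ∑ k ∈ Finset.Icc 1 (n - 1), (n - 1).choose k *
        ∑ i ∈ Finset.Icc 1 k, (k - 1).choose (k - i)
      = (3 ^ (n - 1) + 1) / 2 ∧
    (∀ l : List ℕ, IsAscSeq l →
      (¬ Contains0112 l ↔ ∃ k d, l.filter (fun x => decide (x ≠ 0))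
          = (List.range k).map (· + 1) ++ d ∧
        d.Pairwise (· ≥ ·) ∧ ∀ x ∈ d, x ≤ k)) := by
  have hident : 1 + ∑ k ∈ Finset.Icc 1 (n - 1), (n - 1).choose k *
      ∑ i ∈ Finset.Icc 1 k, (k - 1).choose (k - i) = (3 ^ (n - 1) + 1) / 2 := by
    have e : ∀ k ∈ Finset.Icc 1 (n - 1), (n - 1).choose k *
        ∑ i ∈ Finset.Icc 1 k, (k - 1).choose (k - i) = (n - 1).choose k * 2 ^ (k - 1) := by
      intro k hk
      rw [innerSumEq k (Finset.mem_Icc.1 hk).1]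
    rw [Finset.sum_congr rfl e]
    have := two_mul_main (n - 1)
    omega
  refine ⟨?_, hident, ?_⟩
  · have hset : {l : List ℕ | l.length = n ∧ IsAscSeq l ∧ ¬ Contains0112 l} = ↑(Tfin n) := by
      ext l
      simp only [Set.mem_setOf_eq, Finset.coe_sort_coe, Finset.mem_coe]
      rw [mem_Tfin n hn l]
      constructor
      · rintro ⟨hlen, ha, hav⟩
        obtain ⟨k, d, hf, hsort, hb⟩ := shape_of_avoid l ha hav
        refine ⟨hlen, ha.2.1, k, d, hf, hsort, fun x hx => ⟨?_, hb x hx⟩⟩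
        have hxf : x ∈ l.filter (fun x => decide (x ≠ 0)) :=
          hf ▸ List.mem_append_right _ hx
        have := (List.mem_filter.1 hxf).2
        simp at this
        omega
      · rintro ⟨hlen, h0, k, d, hf, hsort, hb⟩
        have hne : l ≠ [] := by
          intro h
          subst h
          simp at hlen
          omega
        obtain ⟨ha, -⟩ := ascSeq_of_shape l k d hne h0 hf hsort (fun x hx => (hb x hx).2)
        exact ⟨hlen, ha, avoid_of_shape l k d hf hsort⟩
    rw [hset, Set.ncard_coe_finset, card_Tfin n hn]
    exact hident
  · intro l ha
    constructor
    · intro hav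
      obtain ⟨k, d, hf, hsort, hb⟩ := shape_of_avoid l ha hav
      exact ⟨k, d, hf, hsort, hb⟩
    · rintro ⟨k, d, hf, hsort, hb⟩
      exact avoid_of_shape l k d hf hsort
end
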